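/- Let H be a Hopf algebra over a commutative ring k, and let t ∈ H be a left integral, i.e. h·t = ε(h)·t for all h ∈ H, such that ε(t) = 1. Then t is an idempotent (t² = t) and Δ(t)·(t⊗1_H) = t⊗t in H⊗H. In particular, ρ : k → k⊗H ≅ H, ρ(x) = x·t, makes k a right partial H-comodule algebra. -/

import Mathlib

open TensorProduct

/-- The map `A ⊗ H → (A ⊗ H) ⊗ H`, `a ⊗ h ↦ (a ⊗ h⁽¹⁾) ⊗ h⁽²⁾`, i.e. `id_A ⊗ δ`
followed by the inverse associator. -/
noncomputable def coassocMap (k A H : Type*) [CommRing k] [Ring A] [Algebra k A]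
    [Ring H] [Bialgebra k H] :
    A ⊗[k] H →ₗ[k] (A ⊗[k] H) ⊗[k] H :=
  (TensorProduct.assoc k A H H).symm.toLinearMap ∘ₗ
    LinearMap.lTensor A (Coalgebra.comul (R := k) (A := H))

/-- The map `ε' : A ⊗ H → A`, `a ⊗ h ↦ ε(h) a`. -/
noncomputable def counitMap (k A H : Type*) [CommRing k] [Ring A] [Algebra k A]
    [Ring H] [Bialgebra k H] :
    A ⊗[k] H →ₗ[k] A :=
  (TensorProduct.rid k A).toLinearMap ∘ₗ
    LinearMap.lTensor A (Coalgebra.counit (R := k) (A := H))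

/-- The coaction `ρ : k → k ⊗ H`, `x ↦ x ⊗ t`, associated to an element `t ∈ H`. -/
noncomputable def intCoaction (k H : Type*) [CommRing k] [Ring H] [Bialgebra k H]
    (t : H) : k →ₗ[k] k ⊗[k] H :=
  (TensorProduct.mk k k H).flip t

/-- a left integral `t` in a Hopf algebra `H` with `ε(t) = 1` is an
idempotent satisfying `Δ(t)(t ⊗ 1) = t ⊗ t`; in particular `ρ(x) = x ⊗ t` makes `k` a
right partial `H`-comodule algebra (conditions (2.1.1), (2.2.1), (2.2.3)). -/
theorem integral_gives_partial_coaction (k H : Type*) [CommRing k] [Ring H]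
    [HopfAlgebra k H] (t : H)
    (ht : ∀ h : H, h * t = Coalgebra.counit (R := k) h • t)
    (hεt : Coalgebra.counit (R := k) t = (1 : k)) :
    t * t = t ∧
    Coalgebra.comul (R := k) t * (t ⊗ₜ[k] (1 : H)) = t ⊗ₜ[k] t ∧
    (∀ x y : k, intCoaction k H t (x * y) = intCoaction k H t x * intCoaction k H t y) ∧
    (∀ x : k, (intCoaction k H t).rTensor H (intCoaction k H t x) =
      coassocMap k k H (intCoaction k H t x) * (intCoaction k H t 1 ⊗ₜ[k] (1 : H))) ∧
    (∀ x : k, counitMap k k H (intCoaction k H t x) = x) := by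
  have htt : t * t = t := by rw [ht t, hεt, one_smul]
  -- key identity: Δ(t)(t ⊗ 1) = t ⊗ t
  have hmul : ∀ z : H ⊗[k] H, z * (t ⊗ₜ[k] (1 : H)) =
      (LinearMap.rTensor H ((LinearMap.toSpanSingleton k H t) ∘ₗ
        (Coalgebra.counit (R := k) (A := H)))) z := by
    intro z
    induction z using TensorProduct.induction_on with
    | zero => simp
    | tmul a b =>
        simp [Algebra.TensorProduct.tmul_mul_tmul, ht a,
          LinearMap.toSpanSingleton_apply, TensorProduct.smul_tmul']
    | add u v hu hv => rw [add_mul, map_add, hu, hv]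
  have hΔ : Coalgebra.comul (R := k) t * (t ⊗ₜ[k] (1 : H)) = t ⊗ₜ[k] t := by
    rw [hmul, LinearMap.rTensor_comp, LinearMap.comp_apply,
      Coalgebra.rTensor_counit_comul]
    simp [LinearMap.toSpanSingleton_apply]
  refine ⟨htt, hΔ, ?_, ?_, ?_⟩
  · intro x y
    simp [intCoaction, Algebra.TensorProduct.tmul_mul_tmul, htt, mul_comm]
  · intro x
    have hcoa : coassocMap k k H (intCoaction k H t x) =
        (TensorProduct.assoc k k H H).symm (x ⊗ₜ[k] Coalgebra.comul (R := k) t) := by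
      simp [coassocMap, intCoaction]
    have key : ∀ z : H ⊗[k] H,
        ((TensorProduct.assoc k k H H).symm (x ⊗ₜ[k] z)) *
          (((1 : k) ⊗ₜ[k] t) ⊗ₜ[k] (1 : H)) =
        (TensorProduct.assoc k k H H).symm (x ⊗ₜ[k] (z * (t ⊗ₜ[k] (1 : H)))) := by
      intro z
      induction z using TensorProduct.induction_on with
      | zero => simp only [zero_mul, TensorProduct.tmul_zero, LinearEquiv.map_zero]; exact zero_mul (M₀ := (k ⊗[k] H) ⊗[k] H) _
      | tmul a b => simp [Algebra.TensorProduct.tmul_mul_tmul]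
      | add u v hu hv =>
          rw [TensorProduct.tmul_add, LinearEquiv.map_add,
            @add_mul _ _ _ (@Distrib.rightDistribClass _ (Algebra.TensorProduct.instRing).toDistrib),
            hu, hv, add_mul,
            TensorProduct.tmul_add, LinearEquiv.map_add]
    have : intCoaction k H t 1 = (1 : k) ⊗ₜ[k] t := rfl
    rw [hcoa, this, key, hΔ]
    simp [intCoaction]
  · intro x
    simp [counitMap, intCoaction, hεt]
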